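/- arXiv:1302.5777 — 2 statements merged into one kernel-verified Lean document; each statement's English description precedes it below -/
import Mathlib

section
/- Let α, β, γ be a standard system of continuous real functions on a neighbourhood D of 0, and set A₀ = (0, α(0)), C₀ = (0, γ(0)). Then: (i) there exists ε > 0 such that for every x with |x| < ε, writing P = (x, β(x)), there exist unique points C(P) ∈ γ̄ with C₀ ≠ P and A₀, P, C(P) collinear, A(P) ∈ ᾱ with A₀ ≠ P and C₀, P, A(P) collinear, and B(P) ∈ β̄ with A(P), B(P), C(P) collinear; moreover the maps x ↦ A(P), x ↦ B(P) and x ↦ C(P) are continuous functions from (−ε, ε) to ℝ². (ii) Every point B̂ of the graph β̄ whose first coordinate is sufficiently close to 0 satisfies B̂ = B(P) for some such P. -/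
/-- A straight (affine) line in the real plane. -/
def IsLine (L : Set (ℝ × ℝ)) : Prop :=
  ∃ p v : ℝ × ℝ, v ≠ 0 ∧ L = {q | ∃ t : ℝ, q = p + t • v}

/-- Three points of the plane are collinear. -/
def Collin (p q r : ℝ × ℝ) : Prop := Collinear ℝ ({p, q, r} : Set (ℝ × ℝ))

/-- The graph over `D` of a real function. -/
def FunGraph (f : ℝ → ℝ) (D : Set ℝ) : Set (ℝ × ℝ) := {p | p.1 ∈ D ∧ p.2 = f p.1}

/-- A standard system of continuous real functions: three continuous functions on an
open neighbourhood `D` of `0` with `α < β < γ` on `D`, such that every line through a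
point of one of the three graphs meets each of the other two graphs in at most one
point. -/
structure StdSystem (D : Set ℝ) (α β γ : ℝ → ℝ) : Prop where
  isOpen : IsOpen D
  zeroMem : (0 : ℝ) ∈ D
  contA : ContinuousOn α D
  contB : ContinuousOn β D
  contC : ContinuousOn γ D
  ltAB : ∀ x ∈ D, α x < β x
  ltBC : ∀ x ∈ D, β x < γ x
  lineCond : ∀ L : Set (ℝ × ℝ), IsLine L →
    ∀ f g : ℝ → ℝ, f ∈ ({α, β, γ} : Set (ℝ → ℝ)) → g ∈ ({α, β, γ} : Set (ℝ → ℝ)) →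
      f ≠ g → (L ∩ FunGraph f D).Nonempty → (L ∩ FunGraph g D).Subsingleton


lemma collin_iff_det (p q r : ℝ × ℝ) :
    Collin p q r ↔ (q.1 - p.1) * (r.2 - p.2) - (q.2 - p.2) * (r.1 - p.1) = 0 := by
  constructor
  · intro h
    rw [Collin, collinear_iff_of_mem (Set.mem_insert p {q, r})] at h
    obtain ⟨v, hv⟩ := h
    obtain ⟨tq, hq⟩ := hv q (by simp)
    obtain ⟨tr, hr⟩ := hv r (by simp)
    rw [hq, hr]
    simp only [vadd_eq_add, Prod.fst_add, Prod.snd_add, Prod.smul_fst, Prod.smul_snd,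
      smul_eq_mul]
    ring
  · intro h
    rcases eq_or_ne q p with hqp | hqp
    · subst hqp
      have hs : ({q, q, r} : Set (ℝ × ℝ)) = {q, r} := by simp
      rw [Collin, hs]
      exact collinear_pair ℝ q r
    · rw [Collin, collinear_iff_of_mem (Set.mem_insert p {q, r})]
      refine ⟨q - p, ?_⟩
      intro z hz
      simp only [Set.mem_insert_iff, Set.mem_singleton_iff] at hz
      rcases hz with rfl | rfl | rfl
      · exact ⟨0, by simp⟩
      · exact ⟨1, by simp⟩
      · rcases eq_or_ne q.1 p.1 with h1 | h1
        · have h2 : q.2 ≠ p.2 := fun h2 => hqp (Prod.ext h1 h2)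
          have hz1 : z.1 = p.1 := by
            rw [h1] at h
            have h' : (q.2 - p.2) * (z.1 - p.1) = 0 := by linarith
            rcases mul_eq_zero.mp h' with h'' | h''
            · exact absurd (sub_eq_zero.mp h'') h2
            · have := sub_eq_zero.mp h''; linarith
          refine ⟨(z.2 - p.2) / (q.2 - p.2), ?_⟩
          apply Prod.ext
          · simp only [vadd_eq_add, Prod.fst_add, Prod.smul_fst, smul_eq_mul, Prod.fst_sub]
            rw [h1, hz1]; ring
          · simp only [vadd_eq_add, Prod.snd_add, Prod.smul_snd, smul_eq_mul, Prod.snd_sub]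
            rw [div_mul_cancel₀ _ (sub_ne_zero.mpr h2)]; ring
        · refine ⟨(z.1 - p.1) / (q.1 - p.1), ?_⟩
          apply Prod.ext
          · simp only [vadd_eq_add, Prod.fst_add, Prod.smul_fst, smul_eq_mul, Prod.fst_sub]
            rw [div_mul_cancel₀ _ (sub_ne_zero.mpr h1)]; ring
          · simp only [vadd_eq_add, Prod.snd_add, Prod.smul_snd, smul_eq_mul, Prod.snd_sub]
            have hb := sub_ne_zero.mpr h1
            rw [eq_comm, div_mul_eq_mul_div, div_add' _ _ _ hb, div_eq_iff hb]
            linear_combination -h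

lemma collin_swap {p q r : ℝ × ℝ} : Collin p q r ↔ Collin p r q := by
  unfold Collin
  rw [Set.pair_comm q r]

def lineThrough (p q : ℝ × ℝ) : Set (ℝ × ℝ) := {z | ∃ t : ℝ, z = p + t • (q - p)}

lemma isLine_lineThrough {p q : ℝ × ℝ} (h : p ≠ q) : IsLine (lineThrough p q) :=
  ⟨p, q - p, sub_ne_zero.mpr (Ne.symm h), rfl⟩

lemma left_mem_lineThrough (p q : ℝ × ℝ) : p ∈ lineThrough p q := ⟨0, by simp⟩

lemma mem_lineThrough_of_collin {p q r : ℝ × ℝ} (h : p ≠ q) (hc : Collin p q r) :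
    r ∈ lineThrough p q := by
  rw [collin_iff_det] at hc
  rcases eq_or_ne q.1 p.1 with h1 | h1
  · have h2 : q.2 ≠ p.2 := fun h2 => h (Prod.ext h1.symm h2.symm)
    have hr1 : r.1 = p.1 := by
      rw [h1] at hc
      have h' : (q.2 - p.2) * (r.1 - p.1) = 0 := by linarith
      rcases mul_eq_zero.mp h' with h'' | h''
      · exact absurd (sub_eq_zero.mp h'') h2
      · have := sub_eq_zero.mp h''; linarith
    refine ⟨(r.2 - p.2) / (q.2 - p.2), ?_⟩
    apply Prod.ext
    · simp only [Prod.fst_add, Prod.smul_fst, smul_eq_mul, Prod.fst_sub]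
      rw [h1, hr1]; ring
    · simp only [Prod.snd_add, Prod.smul_snd, smul_eq_mul, Prod.snd_sub]
      rw [div_mul_cancel₀ _ (sub_ne_zero.mpr h2)]; ring
  · refine ⟨(r.1 - p.1) / (q.1 - p.1), ?_⟩
    apply Prod.ext
    · simp only [Prod.fst_add, Prod.smul_fst, smul_eq_mul, Prod.fst_sub]
      rw [div_mul_cancel₀ _ (sub_ne_zero.mpr h1)]; ring
    · simp only [Prod.snd_add, Prod.smul_snd, smul_eq_mul, Prod.snd_sub]
      have hb := sub_ne_zero.mpr h1
      rw [eq_comm, div_mul_eq_mul_div, add_div' _ _ _ hb, div_eq_iff hb]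
      linear_combination -hc

open Filter Topology in
lemma tendsto_nhds_of_unique_clusterPt {K : Set ℝ} (hK : IsCompact K)
    {f : Filter ℝ} [hne : f.NeBot] (hfK : f ≤ Filter.principal K) {y₀ : ℝ}
    (h : ∀ y ∈ K, ClusterPt y f → y = y₀) : f ≤ nhds y₀ := by
  by_contra hle
  obtain ⟨s, hs, hsf⟩ := Filter.not_le.mp hle
  set V := interior s with hV
  have hy₀V : y₀ ∈ V := mem_interior_iff_mem_nhds.mpr hs
  have hVf : V ∉ f := fun hVf => hsf (Filter.mem_of_superset hVf interior_subset)
  have hbot : f ⊓ Filter.principal Vᶜ ≠ ⊥ := by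
    rw [Ne, Filter.inf_principal_eq_bot, compl_compl]
    exact hVf
  haveI : (f ⊓ Filter.principal Vᶜ).NeBot := ⟨hbot⟩
  obtain ⟨y, hyK, hy⟩ := hK (f := f ⊓ Filter.principal Vᶜ) (le_trans inf_le_left hfK)
  have hyV : y ∈ Vᶜ := by
    have : y ∈ closure Vᶜ := mem_closure_iff_clusterPt.mpr (hy.mono inf_le_right)
    rwa [IsClosed.closure_eq (isOpen_interior.isClosed_compl)] at this
  exact hyV (h y hyK (hy.mono inf_le_left) ▸ hy₀V)

open Filter Topology in
lemma key_cont {U K : Set ℝ} (hK : IsCompact K) {H : ℝ × ℝ → ℝ}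
    (hH : ContinuousOn H (U ×ˢ K)) {g : ℝ → ℝ}
    (hg : ∀ x ∈ U, g x ∈ K) (hz : ∀ x ∈ U, H (x, g x) = 0)
    (hu : ∀ x ∈ U, ∀ y ∈ K, H (x, y) = 0 → y = g x) :
    ContinuousOn g U := by
  intro x₀ hx₀
  haveI hne : (𝓝[U] x₀).NeBot := mem_closure_iff_nhdsWithin_neBot.mp (subset_closure hx₀)
  have hfK : Filter.map g (𝓝[U] x₀) ≤ Filter.principal K := by
    rw [Filter.le_principal_iff, Filter.mem_map]
    filter_upwards [self_mem_nhdsWithin] with x hx using hg x hx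
  refine tendsto_nhds_of_unique_clusterPt hK hfK ?_
  intro y hyK hy
  set t := (U ×ˢ K) ∩ H ⁻¹' {0} with ht
  -- (x₀, y) is a cluster point of the filter of pairs
  have hcl : ClusterPt (x₀, y) (Filter.map (fun x => (x, g x)) (𝓝[U] x₀)) := by
    rw [clusterPt_iff_nonempty]
    intro W hW V hV
    obtain ⟨P, hP, Q, hQ, hPQ⟩ := mem_nhds_prod_iff.mp hW
    rw [Filter.mem_map] at hV
    have hs' : (fun x => (x, g x)) ⁻¹' V ∩ P ∈ 𝓝[U] x₀ :=
      Filter.inter_mem hV (nhdsWithin_le_nhds hP)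
    have himg : g '' ((fun x => (x, g x)) ⁻¹' V ∩ P) ∈ Filter.map g (𝓝[U] x₀) := by
      rw [Filter.mem_map]
      exact Filter.mem_of_superset hs' (Set.subset_preimage_image _ _)
    obtain ⟨z, hzQ, hz'⟩ := clusterPt_iff_nonempty.mp hy hQ himg
    obtain ⟨x, ⟨hxV, hxP⟩, hgx⟩ := hz'
    exact ⟨(x, g x), hPQ ⟨hxP, hgx ▸ hzQ⟩, hxV⟩
  have hmemcl : (x₀, y) ∈ closure t := by
    rw [mem_closure_iff_clusterPt]
    refine hcl.mono ?_
    rw [Filter.le_principal_iff, Filter.mem_map]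
    filter_upwards [self_mem_nhdsWithin] with x hx
    exact ⟨⟨hx, hg x hx⟩, hz x hx⟩
  have hty : H (x₀, y) = 0 := by
    haveI hne2 : (𝓝[t] (x₀, y)).NeBot := mem_closure_iff_nhdsWithin_neBot.mp hmemcl
    have h1 : Filter.Tendsto H (𝓝[t] (x₀, y)) (𝓝 (H (x₀, y))) :=
      (hH (x₀, y) ⟨hx₀, hyK⟩).mono Set.inter_subset_left
    have h2 : Filter.Tendsto H (𝓝[t] (x₀, y)) (𝓝 0) := by
      refine Filter.Tendsto.congr' ?_ tendsto_const_nhds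
      filter_upwards [self_mem_nhdsWithin] with z hzt
      exact hzt.2.symm
    exact tendsto_nhds_unique h1 h2
  exact hu x₀ hx₀ y hyK hty

lemma collin_mk_iff (x1 y1 x2 y2 x3 y3 : ℝ) :
    Collin (x1, y1) (x2, y2) (x3, y3) ↔ (x2 - x1) * (y3 - y1) - (y2 - y1) * (x3 - x1) = 0 :=
  collin_iff_det _ _ _

open Filter Topology Set in
/-- For a standard system `α, β, γ`, near `0` the auxiliary points `A(P)`, `B(P)`,
`C(P)` exist, are unique, and depend continuously on `P = (x, β(x))`; moreover every
point of the middle graph close enough to the `y`-axis is of the form `B(P)`. -/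
theorem continuity_of_construction (D : Set ℝ) (α β γ : ℝ → ℝ)
    (hsys : StdSystem D α β γ) :
    ∃ ε > (0 : ℝ), Set.Ioo (-ε) ε ⊆ D ∧
      ∃ Af Bf Cf : ℝ → ℝ × ℝ,
        ContinuousOn Af (Set.Ioo (-ε) ε) ∧ ContinuousOn Bf (Set.Ioo (-ε) ε) ∧
        ContinuousOn Cf (Set.Ioo (-ε) ε) ∧
        (∀ x ∈ Set.Ioo (-ε) ε,
          (Cf x ∈ FunGraph γ D ∧ ((0 : ℝ), γ 0) ≠ (x, β x) ∧
              Collin ((0 : ℝ), α 0) (x, β x) (Cf x) ∧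
              ∀ Q ∈ FunGraph γ D, Collin ((0 : ℝ), α 0) (x, β x) Q → Q = Cf x) ∧
          (Af x ∈ FunGraph α D ∧ ((0 : ℝ), α 0) ≠ (x, β x) ∧
              Collin ((0 : ℝ), γ 0) (x, β x) (Af x) ∧
              ∀ Q ∈ FunGraph α D, Collin ((0 : ℝ), γ 0) (x, β x) Q → Q = Af x) ∧
          (Bf x ∈ FunGraph β D ∧ Collin (Af x) (Bf x) (Cf x) ∧
              ∀ Q ∈ FunGraph β D, Collin (Af x) Q (Cf x) → Q = Bf x)) ∧
        ∃ δ > (0 : ℝ), ∀ x' ∈ D, |x'| < δ →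
          ∃ x ∈ Set.Ioo (-ε) ε, ((x', β x') : ℝ × ℝ) = Bf x := by
  classical
  have hab : α 0 < β 0 := hsys.ltAB 0 hsys.zeroMem
  have hbc : β 0 < γ 0 := hsys.ltBC 0 hsys.zeroMem
  set d : ℝ := (β 0 - α 0) / 2 with hd
  set e : ℝ := (γ 0 - β 0) / 2 with he
  have hd0 : 0 < d := by rw [hd]; linarith
  have he0 : 0 < e := by rw [he]; linarith
  -- a good compact interval around 0
  have hDnhds : D ∈ 𝓝 (0 : ℝ) := hsys.isOpen.mem_nhds hsys.zeroMem
  have hβat : ContinuousAt β 0 := hsys.contB.continuousAt hDnhds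
  have hγat : ContinuousAt γ 0 := hsys.contC.continuousAt hDnhds
  have hαat : ContinuousAt α 0 := hsys.contA.continuousAt hDnhds
  have hev : ∀ᶠ u in 𝓝 (0 : ℝ),
      u ∈ D ∧ (α 0 + d < β u ∧ β u < γ 0 - e) ∧ γ u < γ 0 + 1 ∧ α 0 - 1 < α u := by
    have h1 : ∀ᶠ u in 𝓝 (0 : ℝ), u ∈ D := hDnhds
    have h2 : ∀ᶠ u in 𝓝 (0 : ℝ), α 0 + d < β u ∧ β u < γ 0 - e := by
      have : Set.Ioo (α 0 + d) (γ 0 - e) ∈ 𝓝 (β 0) :=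
        Ioo_mem_nhds (by rw [hd]; linarith) (by rw [he]; linarith)
      filter_upwards [hβat this] with u hu using ⟨hu.1, hu.2⟩
    have h3 : ∀ᶠ u in 𝓝 (0 : ℝ), γ u < γ 0 + 1 := hγat (Iio_mem_nhds (by linarith))
    have h4 : ∀ᶠ u in 𝓝 (0 : ℝ), α 0 - 1 < α u := hαat (Ioi_mem_nhds (by linarith))
    filter_upwards [h1, h2, h3, h4] with u m1 m2 m3 m4 using ⟨m1, m2, m3, m4⟩
  obtain ⟨δ₀, hδ₀, hδ⟩ := Metric.eventually_nhds_iff.mp hev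
  set r : ℝ := δ₀ / 2 with hrdef
  have hr0 : 0 < r := by rw [hrdef]; linarith
  set K : Set ℝ := Set.Icc (-r) r with hK
  have hKprop : ∀ u ∈ K, u ∈ D ∧ (α 0 + d < β u ∧ β u < γ 0 - e) ∧ γ u < γ 0 + 1 ∧ α 0 - 1 < α u := by
    intro u hu
    rw [hK, Set.mem_Icc] at hu
    refine hδ ?_
    rw [Real.dist_eq, sub_zero]
    rw [abs_lt]; constructor <;> [linarith [hu.1]; linarith [hu.2]]
  have hKD : K ⊆ D := fun u hu => (hKprop u hu).1
  -- the stretching constant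
  set T : ℝ := (γ 0 + 1 - α 0) / d + (γ 0 + 1 - α 0) / e with hT
  have hca : 0 < γ 0 + 1 - α 0 := by linarith
  have hT2 : 2 < T := by
    have h1 : 2 < (γ 0 + 1 - α 0) / d := by
      rw [lt_div_iff₀ hd0]; rw [hd]; linarith
    have h2 : 0 < (γ 0 + 1 - α 0) / e := div_pos hca he0
    rw [hT]; linarith
  have hT1 : 1 < T := by linarith
  have hT0 : 0 < T := by linarith
  have hTd : γ 0 + 1 - α 0 ≤ T * d := by
    have h2 : 0 ≤ (γ 0 + 1 - α 0) / e * d := mul_nonneg (le_of_lt (div_pos hca he0)) (le_of_lt hd0)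
    rw [hT, add_mul, div_mul_cancel₀ _ (ne_of_gt hd0)]
    linarith
  have hTe : γ 0 + 1 - α 0 ≤ T * e := by
    have h2 : 0 ≤ (γ 0 + 1 - α 0) / d * e := mul_nonneg (le_of_lt (div_pos hca hd0)) (le_of_lt he0)
    rw [hT, add_mul, div_mul_cancel₀ _ (ne_of_gt he0)]
    linarith
  set ε : ℝ := r / T with hε
  have hε0 : 0 < ε := div_pos hr0 hT0
  have hεr : ε < r := div_lt_self hr0 hT1
  have hεT : T * ε = r := by rw [hε, mul_comm]; exact div_mul_cancel₀ r (ne_of_gt hT0)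
  set U : Set ℝ := Set.Ioo (-ε) ε with hU
  have hUK : U ⊆ K := by
    intro x hx
    rw [hU, Set.mem_Ioo] at hx
    rw [hK, Set.mem_Icc]; constructor <;> linarith
  have hUD : U ⊆ D := fun x hx => hKD (hUK hx)
  have habs : ∀ x ∈ U, |x| < ε := by
    intro x hx; rw [hU, Set.mem_Ioo] at hx; rw [abs_lt]; exact ⟨by linarith [hx.1], hx.2⟩
  have hTK : ∀ x ∈ U, T * x ∈ K := by
    intro x hx
    have h1 : |T * x| < r := by
      rw [abs_mul, abs_of_pos hT0, ← hεT]
      exact (mul_lt_mul_iff_right₀ hT0).mpr (habs x hx)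
    rw [hK, Set.mem_Icc]
    rw [abs_lt] at h1; exact ⟨le_of_lt h1.1, le_of_lt h1.2⟩
  have hIK : ∀ x ∈ U, Set.uIcc x (T * x) ⊆ K :=
    fun x hx => Set.ordConnected_Icc.uIcc_subset (hUK hx) (hTK x hx)
  -- existence of the C-intersection coordinate
  have hexC : ∀ x : ℝ, ∃ u : ℝ, x ∈ U →
      u ∈ Set.uIcc x (T * x) ∧ x * (γ u - α 0) - u * (β x - α 0) = 0 := by
    intro x
    by_cases hx : x ∈ U
    swap
    · exact ⟨0, fun h => absurd h hx⟩
    have hFc : ContinuousOn (fun u => x * (γ u - α 0) - u * (β x - α 0)) (Set.uIcc x (T * x)) := by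
      apply ContinuousOn.sub
      · exact continuousOn_const.mul (((hsys.contC.mono hKD).mono (hIK x hx)).sub continuousOn_const)
      · exact continuousOn_id.mul continuousOn_const
    have hxK : x ∈ K := hUK hx
    have hTxK : T * x ∈ K := hTK x hx
    have hFx : x * (γ x - α 0) - x * (β x - α 0) = x * (γ x - β x) := by ring
    have hbr : γ (T * x) - α 0 - T * (β x - α 0) < 0 := by
      have h1 : γ (T * x) < γ 0 + 1 := (hKprop _ hTxK).2.2.1
      have h2 : α 0 + d < β x := (hKprop _ hxK).2.1.1
      have h3 : T * d < T * (β x - α 0) := mul_lt_mul_of_pos_left (by linarith) hT0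
      linarith
    have hpos : 0 < γ x - β x := sub_pos.mpr (hsys.ltBC x (hKD hxK))
    have h0mem : (0 : ℝ) ∈ Set.uIcc (x * (γ x - α 0) - x * (β x - α 0))
        (x * (γ (T * x) - α 0) - T * x * (β x - α 0)) := by
      rw [Set.mem_uIcc]
      have hFT : x * (γ (T * x) - α 0) - T * x * (β x - α 0)
          = x * (γ (T * x) - α 0 - T * (β x - α 0)) := by ring
      rcases le_or_gt 0 x with hx0 | hx0
      · right
        constructor
        · rw [hFT]; exact mul_nonpos_of_nonneg_of_nonpos hx0 (le_of_lt hbr)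
        · rw [hFx]; exact mul_nonneg hx0 (le_of_lt hpos)
      · left
        constructor
        · rw [hFx]; exact mul_nonpos_of_nonpos_of_nonneg (le_of_lt hx0) (le_of_lt hpos)
        · rw [hFT]
          rw [← neg_mul_neg]
          exact mul_nonneg (neg_nonneg.mpr (le_of_lt hx0)) (neg_nonneg.mpr (le_of_lt hbr))
    obtain ⟨u, hu, hFu⟩ := intermediate_value_uIcc hFc h0mem
    exact ⟨u, fun _ => ⟨hu, hFu⟩⟩
  choose cf hcf using hexC
  -- existence of the A-intersection coordinate
  have hexA : ∀ x : ℝ, ∃ u : ℝ, x ∈ U →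
      u ∈ Set.uIcc x (T * x) ∧ x * (α u - γ 0) - u * (β x - γ 0) = 0 := by
    intro x
    by_cases hx : x ∈ U
    swap
    · exact ⟨0, fun h => absurd h hx⟩
    have hFc : ContinuousOn (fun u => x * (α u - γ 0) - u * (β x - γ 0)) (Set.uIcc x (T * x)) := by
      apply ContinuousOn.sub
      · exact continuousOn_const.mul (((hsys.contA.mono hKD).mono (hIK x hx)).sub continuousOn_const)
      · exact continuousOn_id.mul continuousOn_const
    have hxK : x ∈ K := hUK hx
    have hTxK : T * x ∈ K := hTK x hx
    have hFx : x * (α x - γ 0) - x * (β x - γ 0) = x * (α x - β x) := by ring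
    have hbr : 0 < α (T * x) - γ 0 - T * (β x - γ 0) := by
      have h1 : α 0 - 1 < α (T * x) := (hKprop _ hTxK).2.2.2
      have h2 : β x < γ 0 - e := (hKprop _ hxK).2.1.2
      have h3 : T * e < T * (γ 0 - β x) := mul_lt_mul_of_pos_left (by linarith) hT0
      have h4 : T * (β x - γ 0) = -(T * (γ 0 - β x)) := by ring
      linarith
    have hneg : α x - β x < 0 := sub_neg.mpr (hsys.ltAB x (hKD hxK))
    have h0mem : (0 : ℝ) ∈ Set.uIcc (x * (α x - γ 0) - x * (β x - γ 0))
        (x * (α (T * x) - γ 0) - T * x * (β x - γ 0)) := by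
      rw [Set.mem_uIcc]
      have hFT : x * (α (T * x) - γ 0) - T * x * (β x - γ 0)
          = x * (α (T * x) - γ 0 - T * (β x - γ 0)) := by ring
      rcases le_or_gt 0 x with hx0 | hx0
      · left
        constructor
        · rw [hFx]; exact mul_nonpos_of_nonneg_of_nonpos hx0 (le_of_lt hneg)
        · rw [hFT]; exact mul_nonneg hx0 (le_of_lt hbr)
      · right
        constructor
        · rw [hFT]
          exact mul_nonpos_of_nonpos_of_nonneg (le_of_lt hx0) (le_of_lt hbr)
        · rw [hFx]
          rw [← neg_mul_neg]
          exact mul_nonneg (neg_nonneg.mpr (le_of_lt hx0)) (neg_nonneg.mpr (le_of_lt hneg))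
    obtain ⟨u, hu, hFu⟩ := intermediate_value_uIcc hFc h0mem
    exact ⟨u, fun _ => ⟨hu, hFu⟩⟩
  choose af haf using hexA
  have hcfK : ∀ x ∈ U, cf x ∈ K := fun x hx => hIK x hx (hcf x hx).1
  have hafK : ∀ x ∈ U, af x ∈ K := fun x hx => hIK x hx (haf x hx).1
  have hcfD : ∀ x ∈ U, cf x ∈ D := fun x hx => hKD (hcfK x hx)
  have hafD : ∀ x ∈ U, af x ∈ D := fun x hx => hKD (hafK x hx)
  -- existence of the B-intersection coordinate
  have hexB : ∀ x : ℝ, ∃ u : ℝ, x ∈ U →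
      u ∈ Set.uIcc (af x) (cf x) ∧
        (u - af x) * (γ (cf x) - α (af x)) - (β u - α (af x)) * (cf x - af x) = 0 := by
    intro x
    by_cases hx : x ∈ U
    swap
    · exact ⟨0, fun h => absurd h hx⟩
    have hsub : Set.uIcc (af x) (cf x) ⊆ K :=
      Set.ordConnected_Icc.uIcc_subset (hafK x hx) (hcfK x hx)
    have hGc : ContinuousOn
        (fun u => (u - af x) * (γ (cf x) - α (af x)) - (β u - α (af x)) * (cf x - af x))
        (Set.uIcc (af x) (cf x)) := by
      apply ContinuousOn.sub
      · exact (continuousOn_id.sub continuousOn_const).mul continuousOn_const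
      · exact ((((hsys.contB.mono hKD).mono hsub)).sub continuousOn_const).mul continuousOn_const
    have hba : 0 < β (af x) - α (af x) := sub_pos.mpr (hsys.ltAB _ (hafD x hx))
    have hcb : 0 < γ (cf x) - β (cf x) := sub_pos.mpr (hsys.ltBC _ (hcfD x hx))
    have h0mem : (0 : ℝ) ∈ Set.uIcc
        ((af x - af x) * (γ (cf x) - α (af x)) - (β (af x) - α (af x)) * (cf x - af x))
        ((cf x - af x) * (γ (cf x) - α (af x)) - (β (cf x) - α (af x)) * (cf x - af x)) := by
      rw [Set.mem_uIcc]
      have hGa : (af x - af x) * (γ (cf x) - α (af x)) - (β (af x) - α (af x)) * (cf x - af x)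
          = -((β (af x) - α (af x)) * (cf x - af x)) := by ring
      have hGc' : (cf x - af x) * (γ (cf x) - α (af x)) - (β (cf x) - α (af x)) * (cf x - af x)
          = (cf x - af x) * (γ (cf x) - β (cf x)) := by ring
      rcases le_or_gt (af x) (cf x) with hac | hac
      · left
        constructor
        · rw [hGa]
          exact neg_nonpos.mpr (mul_nonneg (le_of_lt hba) (by linarith))
        · rw [hGc']
          exact mul_nonneg (by linarith) (le_of_lt hcb)
      · right
        constructor
        · rw [hGc']
          exact mul_nonpos_of_nonpos_of_nonneg (by linarith) (le_of_lt hcb)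
        · rw [hGa]
          exact neg_nonneg.mpr (mul_nonpos_of_nonneg_of_nonpos (le_of_lt hba) (by linarith))
    obtain ⟨u, hu, hGu⟩ := intermediate_value_uIcc hGc h0mem
    exact ⟨u, fun _ => ⟨hu, hGu⟩⟩
  choose bf hbf using hexB
  have hbfK : ∀ x ∈ U, bf x ∈ K := fun x hx =>
    Set.ordConnected_Icc.uIcc_subset (hafK x hx) (hcfK x hx) (hbf x hx).1
  have hbfD : ∀ x ∈ U, bf x ∈ D := fun x hx => hKD (hbfK x hx)
  -- distinctness of the three functions
  have hαβ : α ≠ β := fun h => (ne_of_lt hab) (congrFun h 0)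
  have hαγ : α ≠ γ := fun h => (ne_of_lt (lt_trans hab hbc)) (congrFun h 0)
  have hγα : γ ≠ α := fun h => hαγ h.symm
  have hαmem : α ∈ ({α, β, γ} : Set (ℝ → ℝ)) := by left; rfl
  have hβmem : β ∈ ({α, β, γ} : Set (ℝ → ℝ)) := by right; left; rfl
  have hγmem : γ ∈ ({α, β, γ} : Set (ℝ → ℝ)) := by right; right; rfl
  -- the master uniqueness principle
  have huniq : ∀ (f g : ℝ → ℝ), f ∈ ({α, β, γ} : Set (ℝ → ℝ)) → g ∈ ({α, β, γ} : Set (ℝ → ℝ)) →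
      f ≠ g → ∀ p q z w : ℝ × ℝ, p ≠ q → p ∈ FunGraph f D → z ∈ FunGraph g D → w ∈ FunGraph g D →
      Collin p q z → Collin p q w → z = w := by
    intro f g hf hg hfg p q z w hpq hp hz hw hcz hcw
    exact hsys.lineCond (lineThrough p q) (isLine_lineThrough hpq) f g hf hg hfg
      ⟨p, left_mem_lineThrough p q, hp⟩
      ⟨mem_lineThrough_of_collin hpq hcz, hz⟩ ⟨mem_lineThrough_of_collin hpq hcw, hw⟩
  have hA0P : ∀ x ∈ U, ((0:ℝ), α 0) ≠ (x, β x) := by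
    intro x hx h
    rw [Prod.mk.injEq] at h
    have h2 := h.2
    rw [← h.1] at h2
    exact (ne_of_lt hab) h2
  have hC0P : ∀ x ∈ U, ((0:ℝ), γ 0) ≠ (x, β x) := by
    intro x hx h
    rw [Prod.mk.injEq] at h
    have h2 := h.2
    rw [← h.1] at h2
    exact (ne_of_gt hbc) h2
  have hA0mem : ((0:ℝ), α 0) ∈ FunGraph α D := ⟨hsys.zeroMem, rfl⟩
  have hC0mem : ((0:ℝ), γ 0) ∈ FunGraph γ D := ⟨hsys.zeroMem, rfl⟩
  -- uniqueness of the C-coordinate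
  have hcuniq : ∀ x ∈ U, ∀ u ∈ D, x * (γ u - α 0) - u * (β x - α 0) = 0 → u = cf x := by
    intro x hx u hu hdet
    have h1 : ((u, γ u) : ℝ × ℝ) = (cf x, γ (cf x)) := by
      refine huniq α γ hαmem hγmem hαγ ((0:ℝ), α 0) (x, β x) _ _ (hA0P x hx)
        hA0mem ⟨hu, rfl⟩ ⟨hcfD x hx, rfl⟩ ?_ ?_
      · rw [collin_mk_iff]; linear_combination hdet
      · rw [collin_mk_iff]; linear_combination (hcf x hx).2
    exact congrArg Prod.fst h1
  -- uniqueness of the A-coordinate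
  have hauniq : ∀ x ∈ U, ∀ u ∈ D, x * (α u - γ 0) - u * (β x - γ 0) = 0 → u = af x := by
    intro x hx u hu hdet
    have h1 : ((u, α u) : ℝ × ℝ) = (af x, α (af x)) := by
      refine huniq γ α hγmem hαmem hγα ((0:ℝ), γ 0) (x, β x) _ _ (hC0P x hx)
        hC0mem ⟨hu, rfl⟩ ⟨hafD x hx, rfl⟩ ?_ ?_
      · rw [collin_mk_iff]; linear_combination hdet
      · rw [collin_mk_iff]; linear_combination (haf x hx).2
    exact congrArg Prod.fst h1
  -- the endpoints of the middle segment are distinct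
  have hACne : ∀ x ∈ U, ((af x, α (af x)) : ℝ × ℝ) ≠ (cf x, γ (cf x)) := by
    intro x hx h
    rw [Prod.mk.injEq] at h
    have h2 := h.2
    rw [← h.1] at h2
    have h3 : α (af x) < γ (af x) :=
      lt_trans (hsys.ltAB _ (hafD x hx)) (hsys.ltBC _ (hafD x hx))
    exact (ne_of_lt h3) h2
  -- uniqueness of the B-coordinate
  have hbuniq : ∀ x ∈ U, ∀ u ∈ D,
      (u - af x) * (γ (cf x) - α (af x)) - (β u - α (af x)) * (cf x - af x) = 0 → u = bf x := by
    intro x hx u hu hdet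
    have h1 : ((u, β u) : ℝ × ℝ) = (bf x, β (bf x)) := by
      refine huniq α β hαmem hβmem hαβ (af x, α (af x)) (cf x, γ (cf x)) _ _ (hACne x hx)
        ⟨hafD x hx, rfl⟩ ⟨hu, rfl⟩ ⟨hbfD x hx, rfl⟩ ?_ ?_
      · rw [collin_mk_iff]; linear_combination -hdet
      · rw [collin_mk_iff]; linear_combination -(hbf x hx).2
    exact congrArg Prod.fst h1
  -- continuity of the three coordinate functions
  have hKcomp : IsCompact K := by rw [hK]; exact isCompact_Icc
  have ccont : ContinuousOn cf U := by
    refine key_cont (H := fun p : ℝ × ℝ => p.1 * (γ p.2 - α 0) - p.2 * (β p.1 - α 0))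
      hKcomp ?_ ?_ ?_ ?_
    · apply ContinuousOn.sub
      · exact continuousOn_fst.mul
          ((hsys.contC.comp continuousOn_snd (fun p hp => hKD hp.2)).sub continuousOn_const)
      · exact continuousOn_snd.mul
          ((hsys.contB.comp continuousOn_fst (fun p hp => hUD hp.1)).sub continuousOn_const)
    · exact fun x hx => hcfK x hx
    · exact fun x hx => (hcf x hx).2
    · exact fun x hx y hy => hcuniq x hx y (hKD hy)
  have acont : ContinuousOn af U := by
    refine key_cont (H := fun p : ℝ × ℝ => p.1 * (α p.2 - γ 0) - p.2 * (β p.1 - γ 0))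
      hKcomp ?_ ?_ ?_ ?_
    · apply ContinuousOn.sub
      · exact continuousOn_fst.mul
          ((hsys.contA.comp continuousOn_snd (fun p hp => hKD hp.2)).sub continuousOn_const)
      · exact continuousOn_snd.mul
          ((hsys.contB.comp continuousOn_fst (fun p hp => hUD hp.1)).sub continuousOn_const)
    · exact fun x hx => hafK x hx
    · exact fun x hx => (haf x hx).2
    · exact fun x hx y hy => hauniq x hx y (hKD hy)
  have bcont : ContinuousOn bf U := by
    refine key_cont (H := fun p : ℝ × ℝ =>
      (p.2 - af p.1) * (γ (cf p.1) - α (af p.1)) - (β p.2 - α (af p.1)) * (cf p.1 - af p.1))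
      hKcomp ?_ ?_ ?_ ?_
    · have hafc : ContinuousOn (fun p : ℝ × ℝ => af p.1) (U ×ˢ K) :=
        acont.comp continuousOn_fst (fun p hp => hp.1)
      have hcfc : ContinuousOn (fun p : ℝ × ℝ => cf p.1) (U ×ˢ K) :=
        ccont.comp continuousOn_fst (fun p hp => hp.1)
      have hαac : ContinuousOn (fun p : ℝ × ℝ => α (af p.1)) (U ×ˢ K) :=
        hsys.contA.comp hafc (fun p hp => hafD _ hp.1)
      have hγcc : ContinuousOn (fun p : ℝ × ℝ => γ (cf p.1)) (U ×ˢ K) :=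
        hsys.contC.comp hcfc (fun p hp => hcfD _ hp.1)
      have hβsc : ContinuousOn (fun p : ℝ × ℝ => β p.2) (U ×ˢ K) :=
        hsys.contB.comp continuousOn_snd (fun p hp => hKD hp.2)
      exact ((continuousOn_snd.sub hafc).mul (hγcc.sub hαac)).sub
        ((hβsc.sub hαac).mul (hcfc.sub hafc))
    · exact fun x hx => hbfK x hx
    · exact fun x hx => (hbf x hx).2
    · exact fun x hx y hy => hbuniq x hx y (hKD hy)
  -- assemble the answer
  refine ⟨ε, hε0, hUD, fun x => (af x, α (af x)), fun x => (bf x, β (bf x)),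
    fun x => (cf x, γ (cf x)), ?_, ?_, ?_, ?_, ?_⟩
  · exact ContinuousOn.prodMk acont (hsys.contA.comp acont (fun x hx => hafD x hx))
  · exact ContinuousOn.prodMk bcont (hsys.contB.comp bcont (fun x hx => hbfD x hx))
  · exact ContinuousOn.prodMk ccont (hsys.contC.comp ccont (fun x hx => hcfD x hx))
  · intro x hx
    refine ⟨⟨⟨hcfD x hx, rfl⟩, hC0P x hx, ?_, ?_⟩, ⟨⟨hafD x hx, rfl⟩, hA0P x hx, ?_, ?_⟩,
      ⟨hbfD x hx, rfl⟩, ?_, ?_⟩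
    · rw [collin_mk_iff]; linear_combination (hcf x hx).2
    · intro Q hQ hcol
      obtain ⟨hQ1, hQ2⟩ := hQ
      have hQeq : Q = (Q.1, γ Q.1) := Prod.ext rfl hQ2
      rw [hQeq] at hcol ⊢
      rw [collin_mk_iff] at hcol
      have h := hcuniq x hx Q.1 hQ1 (by linear_combination hcol)
      rw [h]
    · rw [collin_mk_iff]; linear_combination (haf x hx).2
    · intro Q hQ hcol
      obtain ⟨hQ1, hQ2⟩ := hQ
      have hQeq : Q = (Q.1, α Q.1) := Prod.ext rfl hQ2
      rw [hQeq] at hcol ⊢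
      rw [collin_mk_iff] at hcol
      have h := hauniq x hx Q.1 hQ1 (by linear_combination hcol)
      rw [h]
    · rw [collin_mk_iff]; linear_combination (hbf x hx).2
    · intro Q hQ hcol
      obtain ⟨hQ1, hQ2⟩ := hQ
      have hQeq : Q = (Q.1, β Q.1) := Prod.ext rfl hQ2
      rw [hQeq] at hcol ⊢
      rw [collin_mk_iff] at hcol
      have h := hbuniq x hx Q.1 hQ1 (by linear_combination hcol)
      rw [h]
  · -- surjectivity near the axis
    refine ⟨ε / 2, by linarith, ?_⟩
    intro x' _ hx'
    have hmemU : ∀ y : ℝ, y ∈ Set.uIcc (-(ε/2)) (ε/2) → y ∈ U := by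
      intro y hy
      rw [Set.uIcc_of_le (by linarith), Set.mem_Icc] at hy
      rw [hU, Set.mem_Ioo]
      constructor <;> linarith [hy.1, hy.2]
    have hp : ε/2 ∈ U := hmemU _ (by rw [Set.uIcc_of_le (by linarith), Set.mem_Icc]; constructor <;> linarith)
    have hm : -(ε/2) ∈ U := hmemU _ (by rw [Set.uIcc_of_le (by linarith), Set.mem_Icc]; constructor <;> linarith)
    have hlow : ∀ x ∈ U, 0 ≤ x → x ≤ bf x := by
      intro x hx hx0
      have h1 : x ≤ T * x := le_mul_of_one_le_left hx0 (le_of_lt hT1)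
      have hax : x ≤ af x := by
        have h := (haf x hx).1
        rw [Set.uIcc_of_le h1, Set.mem_Icc] at h
        exact h.1
      have hcx : x ≤ cf x := by
        have h := (hcf x hx).1
        rw [Set.uIcc_of_le h1, Set.mem_Icc] at h
        exact h.1
      have hb := (hbf x hx).1
      rw [Set.mem_uIcc] at hb
      rcases hb with h | h <;> linarith [h.1]
    have hhigh : ∀ x ∈ U, x ≤ 0 → bf x ≤ x := by
      intro x hx hx0
      have h1 : T * x ≤ x := by
        have h := mul_le_mul_of_nonpos_right (le_of_lt hT1) hx0
        rwa [one_mul] at h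
      have hax : af x ≤ x := by
        have h := (haf x hx).1
        rw [Set.uIcc_of_ge h1, Set.mem_Icc] at h
        exact h.2
      have hcx : cf x ≤ x := by
        have h := (hcf x hx).1
        rw [Set.uIcc_of_ge h1, Set.mem_Icc] at h
        exact h.2
      have hb := (hbf x hx).1
      rw [Set.mem_uIcc] at hb
      rcases hb with h | h <;> linarith [h.2]
    have hup : ε/2 ≤ bf (ε/2) := hlow _ hp (by linarith)
    have hdn : bf (-(ε/2)) ≤ -(ε/2) := hhigh _ hm (by linarith)
    have hbcont2 : ContinuousOn bf (Set.uIcc (-(ε/2)) (ε/2)) := bcont.mono hmemU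
    have hx'mem : x' ∈ Set.uIcc (bf (-(ε/2))) (bf (ε/2)) := by
      rw [Set.mem_uIcc]
      left
      rw [abs_lt] at hx'
      constructor <;> linarith [hx'.1, hx'.2]
    obtain ⟨x, hxmem, hbx⟩ := intermediate_value_uIcc hbcont2 hx'mem
    refine ⟨x, hmemU x hxmem, ?_⟩
    rw [← hbx]
end

section
/- Let α, β, γ be a standard system of continuous real functions, set A₀ = (0, α(0)), B₀ = (0, β(0)), C₀ = (0, γ(0)), and assume collinearity between ᾱ, β̄ and γ̄ is described by a commutative group operation (A, ⊕) via parametrisations (jointly denoted f). Let P ∈ β̄, A ∈ ᾱ, C ∈ γ̄ and B ∈ β̄ be points such that the triples (C₀, P, A), (A₀, P, C) and (A, B, C) are each collinear (with distinct members). Then: (i) if f(P) = f(B₀) ⊕ p and f(B) = f(B₀) ⊕ b, then b = p ⊕ p; (ii) for every B ∈ β̄ sufficiently close to B₀ there exists such a point P ∈ β̄ with f(P) ⊖ f(B₀) ⊕ f(P) ⊖ f(B₀) = f(B) ⊖ f(B₀). -/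
/-- Collinearity between the three curves `Γ₁, Γ₂, Γ₃` is described by the abelian
topological group `A` via the (joint) parametrisation `f`: each restriction of `f` is
a topological embedding (continuous injection which is a homeomorphism onto its
image), and three distinct points, one on each curve, are collinear iff their
`f`-values sum to `0`. -/
def DescribesCollin {A : Type*} [AddCommGroup A] [TopologicalSpace A]
    (Γ₁ Γ₂ Γ₃ : Set (ℝ × ℝ)) (f : ℝ × ℝ → A) : Prop :=
  Topology.IsEmbedding (Γ₁.restrict f) ∧ Topology.IsEmbedding (Γ₂.restrict f) ∧
  Topology.IsEmbedding (Γ₃.restrict f) ∧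
  ∀ P₁ ∈ Γ₁, ∀ P₂ ∈ Γ₂, ∀ P₃ ∈ Γ₃, P₁ ≠ P₂ → P₁ ≠ P₃ → P₂ ≠ P₃ →
    (Collin P₁ P₂ P₃ ↔ f P₁ + f P₂ + f P₃ = 0)

-- ### Auxiliary lemmas

lemma collin_of_param (p v a b c : ℝ × ℝ) (ta tb tc : ℝ)
    (ha : a = p + ta • v) (hb : b = p + tb • v) (hc : c = p + tc • v) :
    Collin a b c := by
  rw [Collin, collinear_iff_exists_forall_eq_smul_vadd]
  refine ⟨p, v, ?_⟩
  intro q hq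
  simp only [Set.mem_insert_iff, Set.mem_singleton_iff] at hq
  rcases hq with rfl | rfl | rfl
  · exact ⟨ta, by rw [ha, vadd_eq_add, add_comm]⟩
  · exact ⟨tb, by rw [hb, vadd_eq_add, add_comm]⟩
  · exact ⟨tc, by rw [hc, vadd_eq_add, add_comm]⟩

lemma pt_eq (p v : ℝ × ℝ) (t : ℝ) : p + t • v = (p.1 + t * v.1, p.2 + t * v.2) := rfl

lemma graph_ne {D : Set ℝ} {α β : ℝ → ℝ} (hlt : ∀ x ∈ D, α x < β x)
    {P Q : ℝ × ℝ} (hP : P ∈ FunGraph α D) (hQ : Q ∈ FunGraph β D) : P ≠ Q := by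
  rintro rfl
  exact absurd (hP.2.symm.trans hQ.2) (ne_of_lt (hlt P.1 hP.1))

section Main

variable {A : Type} [AddCommGroup A] [TopologicalSpace A] [IsTopologicalAddGroup A]
  {D : Set ℝ} {α β γ : ℝ → ℝ}

omit [IsTopologicalAddGroup A] in
lemma base_triple (hsys : StdSystem D α β γ) (f : ℝ × ℝ → A)
    (hf : DescribesCollin (FunGraph α D) (FunGraph β D) (FunGraph γ D) f) :
    f ((0:ℝ), α 0) + f ((0:ℝ), β 0) + f ((0:ℝ), γ 0) = 0 := by
  have hltAC : ∀ x ∈ D, α x < γ x := fun x hx => (hsys.ltAB x hx).trans (hsys.ltBC x hx)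
  have hA₀ : ((0:ℝ), α 0) ∈ FunGraph α D := ⟨hsys.zeroMem, rfl⟩
  have hB₀ : ((0:ℝ), β 0) ∈ FunGraph β D := ⟨hsys.zeroMem, rfl⟩
  have hC₀ : ((0:ℝ), γ 0) ∈ FunGraph γ D := ⟨hsys.zeroMem, rfl⟩
  have hcoll : Collin ((0:ℝ), α 0) ((0:ℝ), β 0) ((0:ℝ), γ 0) := by
    apply collin_of_param ((0:ℝ), α 0) ((0:ℝ), (1:ℝ)) _ _ _ 0 (β 0 - α 0) (γ 0 - α 0) <;>
      simp [Prod.ext_iff]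
  exact (hf.2.2.2 _ hA₀ _ hB₀ _ hC₀ (graph_ne hsys.ltAB hA₀ hB₀)
    (graph_ne hltAC hA₀ hC₀) (graph_ne hsys.ltBC hB₀ hC₀)).mp hcoll

omit [IsTopologicalAddGroup A] in
lemma double_eq (hsys : StdSystem D α β γ) (f : ℝ × ℝ → A)
    (hf : DescribesCollin (FunGraph α D) (FunGraph β D) (FunGraph γ D) f)
    {P Ap Cp B : ℝ × ℝ}
    (hP : P ∈ FunGraph β D) (hAp : Ap ∈ FunGraph α D) (hCp : Cp ∈ FunGraph γ D)
    (hB : B ∈ FunGraph β D)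
    (h1 : Collin Ap P ((0:ℝ), γ 0)) (h2 : Collin ((0:ℝ), α 0) P Cp)
    (h3 : Collin Ap B Cp) :
    f B + f ((0:ℝ), β 0) = f P + f P := by
  have hltAC : ∀ x ∈ D, α x < γ x := fun x hx => (hsys.ltAB x hx).trans (hsys.ltBC x hx)
  have hA₀ : ((0:ℝ), α 0) ∈ FunGraph α D := ⟨hsys.zeroMem, rfl⟩
  have hC₀ : ((0:ℝ), γ 0) ∈ FunGraph γ D := ⟨hsys.zeroMem, rfl⟩
  have e0 := base_triple hsys f hf
  have e1 : f Ap + f P + f ((0:ℝ), γ 0) = 0 :=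
    (hf.2.2.2 _ hAp _ hP _ hC₀ (graph_ne hsys.ltAB hAp hP)
      (graph_ne hltAC hAp hC₀) (graph_ne hsys.ltBC hP hC₀)).mp h1
  have e2 : f ((0:ℝ), α 0) + f P + f Cp = 0 :=
    (hf.2.2.2 _ hA₀ _ hP _ hCp (graph_ne hsys.ltAB hA₀ hP)
      (graph_ne hltAC hA₀ hCp) (graph_ne hsys.ltBC hP hCp)).mp h2
  have e3 : f Ap + f B + f Cp = 0 :=
    (hf.2.2.2 _ hAp _ hB _ hCp (graph_ne hsys.ltAB hAp hB)
      (graph_ne hltAC hAp hCp) (graph_ne hsys.ltBC hB hCp)).mp h3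
  have key : f B + f ((0:ℝ), β 0) - (f P + f P) =
      (f Ap + f B + f Cp) - (f Ap + f P + f ((0:ℝ), γ 0))
        - (f ((0:ℝ), α 0) + f P + f Cp)
        + (f ((0:ℝ), α 0) + f ((0:ℝ), β 0) + f ((0:ℝ), γ 0)) := by abel
  rw [e0, e1, e2, e3] at key
  simp only [sub_zero, zero_sub, add_zero, neg_zero, zero_add] at key
  exact sub_eq_zero.mp key

omit [IsTopologicalAddGroup A] in
lemma exists_double (hsys : StdSystem D α β γ) (f : ℝ × ℝ → A)
    (hf : DescribesCollin (FunGraph α D) (FunGraph β D) (FunGraph γ D) f) :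
    ∃ δ > (0:ℝ), Set.Icc (-δ) δ ⊆ D ∧ ∀ y : ℝ, |y| < δ →
      ∃ x ∈ D, (0 < y → 0 < x) ∧ (y < 0 → x < 0) ∧
        f (x, β x) + f ((0:ℝ), β 0) = f (y, β y) + f (y, β y) := by
  classical
  -- a compact interval inside D
  obtain ⟨r₀, hr₀, hball⟩ := Metric.isOpen_iff.mp hsys.isOpen 0 hsys.zeroMem
  set r : ℝ := r₀ / 2 with hrdef
  have hrpos : 0 < r := by positivity
  have hIccD : Set.Icc (-r) r ⊆ D := by
    intro x hx
    apply hball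
    rw [Metric.mem_ball, Real.dist_eq, sub_zero]
    rw [Set.mem_Icc] at hx
    rw [abs_lt]; constructor <;> linarith
  -- bounds on α, γ on the interval
  obtain ⟨Ma, hMa⟩ := isCompact_Icc.exists_bound_of_continuousOn (hsys.contA.mono hIccD)
  obtain ⟨Mc, hMc⟩ := isCompact_Icc.exists_bound_of_continuousOn (hsys.contC.mono hIccD)
  have hMa0 : 0 ≤ Ma := le_trans (norm_nonneg _) (hMa 0 (by constructor <;> linarith))
  have hMc0 : 0 ≤ Mc := le_trans (norm_nonneg _) (hMc 0 (by constructor <;> linarith))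
  -- separating constants
  set c₁ : ℝ := (α 0 + β 0) / 2 with hc₁def
  set c₂ : ℝ := (β 0 + γ 0) / 2 with hc₂def
  have hab0 : α 0 < β 0 := hsys.ltAB 0 hsys.zeroMem
  have hbc0 : β 0 < γ 0 := hsys.ltBC 0 hsys.zeroMem
  have hαc : ContinuousAt α 0 := hsys.contA.continuousAt (hsys.isOpen.mem_nhds hsys.zeroMem)
  have hβc : ContinuousAt β 0 := hsys.contB.continuousAt (hsys.isOpen.mem_nhds hsys.zeroMem)
  have hγc : ContinuousAt γ 0 := hsys.contC.continuousAt (hsys.isOpen.mem_nhds hsys.zeroMem)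
  have hev : ∀ᶠ x in nhds (0:ℝ), α x < c₁ ∧ c₁ < β x ∧ β x < c₂ ∧ c₂ < γ x := by
    have h1 : ∀ᶠ x in nhds (0:ℝ), α x < c₁ :=
      hαc.eventually (eventually_lt_nhds (by rw [hc₁def]; linarith))
    have h2 : ∀ᶠ x in nhds (0:ℝ), c₁ < β x :=
      hβc.eventually (eventually_gt_nhds (by rw [hc₁def]; linarith))
    have h3 : ∀ᶠ x in nhds (0:ℝ), β x < c₂ :=
      hβc.eventually (eventually_lt_nhds (by rw [hc₂def]; linarith))
    have h4 : ∀ᶠ x in nhds (0:ℝ), c₂ < γ x :=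
      hγc.eventually (eventually_gt_nhds (by rw [hc₂def]; linarith))
    exact h1.and (h2.and (h3.and h4))
  obtain ⟨δ₁, hδ₁pos, hδ₁⟩ := Metric.eventually_nhds_iff.mp hev
  set s1 : ℝ := c₁ - α 0 with hs1def
  set s2 : ℝ := γ 0 - c₂ with hs2def
  have hs1 : 0 < s1 := by rw [hs1def, hc₁def]; linarith
  have hs2 : 0 < s2 := by rw [hs2def, hc₂def]; linarith
  set δ : ℝ := min (min (δ₁ / 2) (r / 2))
      (min (r * s2 / (|γ 0| + Ma + 1)) (r * s1 / (|α 0| + Mc + 1))) with hδdef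
  have hδpos : 0 < δ := by
    apply lt_min (lt_min (by positivity) (by positivity))
    apply lt_min <;> positivity
  have hδδ₁ : δ < δ₁ := lt_of_le_of_lt (le_trans (min_le_left _ _) (min_le_left _ _)) (by linarith)
  have hδr : δ < r := lt_of_le_of_lt (le_trans (min_le_left _ _) (min_le_right _ _)) (by linarith)
  have hδ2 : δ * (|γ 0| + Ma + 1) ≤ r * s2 := by
    have h : δ ≤ r * s2 / (|γ 0| + Ma + 1) := (min_le_right _ _).trans (min_le_left _ _)
    have hpos : (0:ℝ) < |γ 0| + Ma + 1 := by positivity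
    calc δ * (|γ 0| + Ma + 1) ≤ (r * s2 / (|γ 0| + Ma + 1)) * (|γ 0| + Ma + 1) := by
          apply mul_le_mul_of_nonneg_right h (le_of_lt hpos)
      _ = r * s2 := by field_simp
  have hδ3 : δ * (|α 0| + Mc + 1) ≤ r * s1 := by
    have h : δ ≤ r * s1 / (|α 0| + Mc + 1) := (min_le_right _ _).trans (min_le_right _ _)
    have hpos : (0:ℝ) < |α 0| + Mc + 1 := by positivity
    calc δ * (|α 0| + Mc + 1) ≤ (r * s1 / (|α 0| + Mc + 1)) * (|α 0| + Mc + 1) := by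
          apply mul_le_mul_of_nonneg_right h (le_of_lt hpos)
      _ = r * s1 := by field_simp
  have hδIcc : Set.Icc (-δ) δ ⊆ D := fun x hx => hIccD ⟨by linarith [hx.1], by linarith [hx.2]⟩
  refine ⟨δ, hδpos, hδIcc, ?_⟩
  intro y hy
  rcases eq_or_ne y 0 with rfl | hy0
  · exact ⟨0, hsys.zeroMem, fun h => absurd h (lt_irrefl 0), fun h => absurd h (lt_irrefl 0), rfl⟩
  -- now y ≠ 0
  set Y : ℝ := |y| with hYdef
  have hYpos : 0 < Y := abs_pos.mpr hy0
  have hYδ : Y < δ := hy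
  set T : ℝ := r / Y with hTdef
  have hT1 : 1 < T := by
    rw [hTdef, lt_div_iff₀ hYpos]; linarith
  have hTY : T * Y = r := div_mul_cancel₀ r (ne_of_gt hYpos)
  -- basic: for t ∈ [0, T], the point t * y lies in Icc (-r) r ⊆ D
  have hmem : ∀ t : ℝ, 0 ≤ t → t ≤ T → t * y ∈ Set.Icc (-r) r := by
    intro t ht0 htT
    have : |t * y| ≤ r := by
      rw [abs_mul, abs_of_nonneg ht0]
      calc t * |y| ≤ T * Y := by
            apply mul_le_mul htT (le_refl _) (abs_nonneg _) (by linarith)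
        _ = r := hTY
    rw [Set.mem_Icc]; rw [abs_le] at this; exact this
  have hmemD : ∀ t : ℝ, 0 ≤ t → t ≤ T → t * y ∈ D := fun t h1 h2 => hIccD (hmem t h1 h2)
  -- near-0 separation for |x| ≤ |y|
  have hsep : ∀ t : ℝ, 0 ≤ t → t ≤ 1 →
      α (t * y) < c₁ ∧ c₁ < β (t * y) ∧ β (t * y) < c₂ ∧ c₂ < γ (t * y) := by
    intro t ht0 ht1
    apply hδ₁
    rw [Real.dist_eq, sub_zero, abs_mul, abs_of_nonneg ht0]
    calc t * |y| ≤ 1 * |y| := mul_le_mul_of_nonneg_right ht1 (abs_nonneg _)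
      _ = Y := by rw [one_mul]
      _ < δ₁ := lt_trans hYδ hδδ₁
  have hsepy := hsep 1 zero_le_one (le_refl 1)
  rw [one_mul] at hsepy
  have hyD : y ∈ D := hδIcc (by rw [Set.mem_Icc]; rw [abs_lt] at hy; exact ⟨hy.1.le, hy.2.le⟩)
  have hT0 : (0:ℝ) < T := lt_trans one_pos hT1
  -- ### construction of A on the line through C₀ and P
  have hcont₁ : ContinuousOn (fun t => γ 0 + t * (β y - γ 0) - α (t * y)) (Set.uIcc 1 T) := by
    apply ContinuousOn.sub
    · exact (continuous_const.add (continuous_id.mul continuous_const)).continuousOn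
    · apply hsys.contA.comp (continuous_mul_right y).continuousOn
      intro t ht
      rw [Set.uIcc_of_le hT1.le, Set.mem_Icc] at ht
      exact hmemD t (le_trans zero_le_one ht.1) ht.2
  have hpos1 : (0:ℝ) < γ 0 + 1 * (β y - γ 0) - α (1 * y) := by
    rw [one_mul, one_mul]
    have h1 := hsepy.1
    have h2 := hsepy.2.1
    linarith
  have hnegT : γ 0 + T * (β y - γ 0) - α (T * y) < 0 := by
    have hαT : ‖α (T * y)‖ ≤ Ma := hMa _ (hmem T hT0.le le_rfl)
    rw [Real.norm_eq_abs, abs_le] at hαT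
    have hβy : β y - γ 0 ≤ -s2 := by
      have := hsepy.2.2.1; rw [hs2def]; linarith
    have hTs2 : |γ 0| + Ma + 1 ≤ T * s2 := by
      have h1 : Y * (|γ 0| + Ma + 1) < δ * (|γ 0| + Ma + 1) :=
        mul_lt_mul_of_pos_right hYδ (by positivity)
      have h2 : Y * (|γ 0| + Ma + 1) ≤ r * s2 := by
        calc Y * (|γ 0| + Ma + 1) ≤ δ * (|γ 0| + Ma + 1) := h1.le
          _ ≤ r * s2 := hδ2
      rw [hTdef, div_mul_eq_mul_div, le_div_iff₀ hYpos]
      linarith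
    have h3 : T * (β y - γ 0) ≤ T * (-s2) := mul_le_mul_of_nonneg_left hβy hT0.le
    have habs : γ 0 ≤ |γ 0| := le_abs_self _
    linarith [hαT.1]
  obtain ⟨tA, htAmem, heqA⟩ := intermediate_value_uIcc hcont₁
    (Set.mem_uIcc.mpr (Or.inr ⟨hnegT.le, hpos1.le⟩))
  rw [Set.uIcc_of_le hT1.le, Set.mem_Icc] at htAmem
  set xA : ℝ := tA * y with hxAdef
  have hxAmem : xA ∈ Set.Icc (-r) r := hmem tA (le_trans zero_le_one htAmem.1) htAmem.2
  have hxAD : xA ∈ D := hIccD hxAmem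
  have hαxA : α xA = γ 0 + tA * (β y - γ 0) := by
    have : γ 0 + tA * (β y - γ 0) - α (tA * y) = 0 := heqA
    rw [hxAdef]; linarith
  -- ### construction of C on the line through A₀ and P
  have hcont₂ : ContinuousOn (fun t => α 0 + t * (β y - α 0) - γ (t * y)) (Set.uIcc 1 T) := by
    apply ContinuousOn.sub
    · exact (continuous_const.add (continuous_id.mul continuous_const)).continuousOn
    · apply hsys.contC.comp (continuous_mul_right y).continuousOn
      intro t ht
      rw [Set.uIcc_of_le hT1.le, Set.mem_Icc] at ht
      exact hmemD t (le_trans zero_le_one ht.1) ht.2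
  have hneg1 : α 0 + 1 * (β y - α 0) - γ (1 * y) < 0 := by
    rw [one_mul, one_mul]
    have h1 := hsepy.2.2.1
    have h2 := hsepy.2.2.2
    linarith
  have hposT : (0:ℝ) < α 0 + T * (β y - α 0) - γ (T * y) := by
    have hγT : ‖γ (T * y)‖ ≤ Mc := hMc _ (hmem T hT0.le le_rfl)
    rw [Real.norm_eq_abs, abs_le] at hγT
    have hβy : s1 ≤ β y - α 0 := by
      have := hsepy.2.1; rw [hs1def]; linarith
    have hTs1 : |α 0| + Mc + 1 ≤ T * s1 := by
      have h1 : Y * (|α 0| + Mc + 1) < δ * (|α 0| + Mc + 1) :=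
        mul_lt_mul_of_pos_right hYδ (by positivity)
      have h2 : Y * (|α 0| + Mc + 1) ≤ r * s1 := by
        calc Y * (|α 0| + Mc + 1) ≤ δ * (|α 0| + Mc + 1) := h1.le
          _ ≤ r * s1 := hδ3
      rw [hTdef, div_mul_eq_mul_div, le_div_iff₀ hYpos]
      linarith
    have h3 : T * s1 ≤ T * (β y - α 0) := mul_le_mul_of_nonneg_left hβy hT0.le
    have habs : -|α 0| ≤ α 0 := neg_abs_le _
    linarith [hγT.2]
  obtain ⟨tC, htCmem, heqC⟩ := intermediate_value_uIcc hcont₂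
    (Set.mem_uIcc.mpr (Or.inl ⟨hneg1.le, hposT.le⟩))
  rw [Set.uIcc_of_le hT1.le, Set.mem_Icc] at htCmem
  set xC : ℝ := tC * y with hxCdef
  have hxCmem : xC ∈ Set.Icc (-r) r := hmem tC (le_trans zero_le_one htCmem.1) htCmem.2
  have hxCD : xC ∈ D := hIccD hxCmem
  have hγxC : γ xC = α 0 + tC * (β y - α 0) := by
    have : α 0 + tC * (β y - α 0) - γ (tC * y) = 0 := heqC
    rw [hxCdef]; linarith
  -- ### construction of B on the segment from A to C
  have huIcc : ∀ t : ℝ, 0 ≤ t → t ≤ 1 → xA + t * (xC - xA) ∈ Set.Icc (-r) r := by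
    intro t ht0 ht1
    rw [Set.mem_Icc]
    rw [Set.mem_Icc] at hxAmem hxCmem
    constructor
    · have e1 : 0 ≤ (1 - t) * (xA + r) :=
        mul_nonneg (by linarith) (by linarith)
      have e2 : 0 ≤ t * (xC + r) := mul_nonneg ht0 (by linarith)
      linarith [e1, e2]
    · have e1 : 0 ≤ (1 - t) * (r - xA) :=
        mul_nonneg (by linarith) (by linarith)
      have e2 : 0 ≤ t * (r - xC) := mul_nonneg ht0 (by linarith)
      linarith [e1, e2]
  have hcont₃ : ContinuousOn
      (fun t => α xA + t * (γ xC - α xA) - β (xA + t * (xC - xA))) (Set.uIcc 0 1) := by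
    apply ContinuousOn.sub
    · exact (continuous_const.add (continuous_id.mul continuous_const)).continuousOn
    · apply hsys.contB.comp (continuous_const.add (continuous_id.mul continuous_const)).continuousOn
      intro t ht
      rw [Set.uIcc_of_le zero_le_one, Set.mem_Icc] at ht
      exact hIccD (huIcc t ht.1 ht.2)
  have hneg0 : α xA + 0 * (γ xC - α xA) - β (xA + 0 * (xC - xA)) < 0 := by
    simp only [zero_mul, add_zero]
    linarith [hsys.ltAB xA hxAD]
  have hpos1' : (0:ℝ) < α xA + 1 * (γ xC - α xA) - β (xA + 1 * (xC - xA)) := by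
    simp only [one_mul]
    have : xA + (xC - xA) = xC := by ring
    rw [this]
    linarith [hsys.ltBC xC hxCD]
  obtain ⟨t₀, ht₀mem, heqB⟩ := intermediate_value_uIcc hcont₃
    (Set.mem_uIcc.mpr (Or.inl ⟨hneg0.le, hpos1'.le⟩))
  rw [Set.uIcc_of_le zero_le_one, Set.mem_Icc] at ht₀mem
  set xB : ℝ := xA + t₀ * (xC - xA) with hxBdef
  have hxBD : xB ∈ D := hIccD (huIcc t₀ ht₀mem.1 ht₀mem.2)
  have hβxB : β xB = α xA + t₀ * (γ xC - α xA) := by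
    have : α xA + t₀ * (γ xC - α xA) - β (xA + t₀ * (xC - xA)) = 0 := heqB
    rw [hxBdef]; linarith
  -- ### signs
  have hsign1 : 0 < y → 0 < xB := by
    intro hy'
    have hA' : y ≤ xA := by
      have := mul_nonneg (sub_nonneg.mpr htAmem.1) hy'.le
      rw [hxAdef]; linarith [this]
    have hC' : y ≤ xC := by
      have := mul_nonneg (sub_nonneg.mpr htCmem.1) hy'.le
      rw [hxCdef]; linarith [this]
    have : y ≤ xB := by
      have e1 : 0 ≤ t₀ * (xC - y) := mul_nonneg ht₀mem.1 (by linarith)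
      have e2 : 0 ≤ (1 - t₀) * (xA - y) := mul_nonneg (by linarith) (by linarith)
      rw [hxBdef]; linarith [e1, e2]
    linarith
  have hsign2 : y < 0 → xB < 0 := by
    intro hy'
    have hA' : xA ≤ y := by
      have := mul_nonneg (sub_nonneg.mpr htAmem.1) (neg_nonneg.mpr hy'.le)
      rw [hxAdef]; linarith [this]
    have hC' : xC ≤ y := by
      have := mul_nonneg (sub_nonneg.mpr htCmem.1) (neg_nonneg.mpr hy'.le)
      rw [hxCdef]; linarith [this]
    have : xB ≤ y := by
      have e1 : 0 ≤ t₀ * (y - xC) := mul_nonneg ht₀mem.1 (by linarith)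
      have e2 : 0 ≤ (1 - t₀) * (y - xA) := mul_nonneg (by linarith) (by linarith)
      rw [hxBdef]; linarith [e1, e2]
    linarith
  -- ### collinearities
  have h1 : Collin (xA, α xA) (y, β y) ((0:ℝ), γ 0) := by
    apply collin_of_param ((0:ℝ), γ 0) (y, β y - γ 0) _ _ _ tA 1 0
    · rw [pt_eq, Prod.mk.injEq]
      exact ⟨by rw [hxAdef]; ring, hαxA⟩
    · rw [pt_eq, Prod.mk.injEq]
      exact ⟨by ring, by ring⟩
    · rw [pt_eq, Prod.mk.injEq]
      exact ⟨by ring, by ring⟩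
  have h2 : Collin ((0:ℝ), α 0) (y, β y) (xC, γ xC) := by
    apply collin_of_param ((0:ℝ), α 0) (y, β y - α 0) _ _ _ 0 1 tC
    · rw [pt_eq, Prod.mk.injEq]
      exact ⟨by ring, by ring⟩
    · rw [pt_eq, Prod.mk.injEq]
      exact ⟨by ring, by ring⟩
    · rw [pt_eq, Prod.mk.injEq]
      exact ⟨by rw [hxCdef]; ring, hγxC⟩
  have h3 : Collin (xA, α xA) (xB, β xB) (xC, γ xC) := by
    apply collin_of_param (xA, α xA) (xC - xA, γ xC - α xA) _ _ _ 0 t₀ 1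
    · rw [pt_eq, Prod.mk.injEq]
      exact ⟨by ring, by ring⟩
    · rw [pt_eq, Prod.mk.injEq]
      exact ⟨hxBdef, hβxB⟩
    · rw [pt_eq, Prod.mk.injEq]
      exact ⟨by ring, by ring⟩
  -- ### conclusion
  have hPmem : ((y, β y) : ℝ × ℝ) ∈ FunGraph β D := ⟨hyD, rfl⟩
  have hAmem : ((xA, α xA) : ℝ × ℝ) ∈ FunGraph α D := ⟨hxAD, rfl⟩
  have hCmem : ((xC, γ xC) : ℝ × ℝ) ∈ FunGraph γ D := ⟨hxCD, rfl⟩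
  have hBmem : ((xB, β xB) : ℝ × ℝ) ∈ FunGraph β D := ⟨hxBD, rfl⟩
  exact ⟨xB, hxBD, hsign1, hsign2,
    double_eq hsys f hf hPmem hAmem hCmem hBmem h1 h2 h3⟩

end Main

lemma collin_rev {a b c : ℝ × ℝ} (h : Collin a b c) : Collin c b a := by
  unfold Collin at *
  have hs : ({c, b, a} : Set (ℝ × ℝ)) = {a, b, c} := by
    ext x; simp only [Set.mem_insert_iff, Set.mem_singleton_iff]; tauto
  rwa [hs]


/-- **Parameter-halving lemma.**  With `A₀ = (0,α(0))`, `B₀ = (0,β(0))`,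
`C₀ = (0,γ(0))`: (i) if `P ∈ β̄`, `A ∈ ᾱ`, `C ∈ γ̄`, `B ∈ β̄` with `(C₀,P,A)`,
`(A₀,P,C)`, `(A,B,C)` collinear triples of distinct points and
`f(P) = f(B₀) ⊕ p`, `f(B) = f(B₀) ⊕ b`, then `b = p ⊕ p`; (ii) for every `B ∈ β̄`
sufficiently close to `B₀` there is `P ∈ β̄` with
`(f(P) ⊖ f(B₀)) ⊕ (f(P) ⊖ f(B₀)) = f(B) ⊖ f(B₀)`. -/
theorem parameter_halving {A : Type} [AddCommGroup A] [TopologicalSpace A]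
    [IsTopologicalAddGroup A] (D : Set ℝ) (α β γ : ℝ → ℝ) (hsys : StdSystem D α β γ)
    (f : ℝ × ℝ → A)
    (hf : DescribesCollin (FunGraph α D) (FunGraph β D) (FunGraph γ D) f) :
    (∀ P ∈ FunGraph β D, ∀ Ap ∈ FunGraph α D, ∀ Cp ∈ FunGraph γ D, ∀ B ∈ FunGraph β D,
      ((0 : ℝ), γ 0) ≠ P → P ≠ Ap → ((0 : ℝ), γ 0) ≠ Ap →
      Collin ((0 : ℝ), γ 0) P Ap →
      ((0 : ℝ), α 0) ≠ P → P ≠ Cp → ((0 : ℝ), α 0) ≠ Cp →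
      Collin ((0 : ℝ), α 0) P Cp →
      Ap ≠ B → B ≠ Cp → Ap ≠ Cp → Collin Ap B Cp →
      ∀ p b : A, f P = f ((0 : ℝ), β 0) + p → f B = f ((0 : ℝ), β 0) + b →
        b = p + p) ∧
    (∃ ε > (0 : ℝ), ∀ B ∈ FunGraph β D, dist B (((0 : ℝ), β 0) : ℝ × ℝ) < ε →
      ∃ P ∈ FunGraph β D,
        (f P - f ((0 : ℝ), β 0)) + (f P - f ((0 : ℝ), β 0)) =
          f B - f ((0 : ℝ), β 0)) := by
  constructor
  · -- part (i)
    intro P hP Ap hAp Cp hCp B hB _ _ _ hcoll1 _ _ _ hcoll2 _ _ _ hcoll3 p b hp hb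
    have hd := double_eq hsys f hf hP hAp hCp hB (collin_rev hcoll1) hcoll2 hcoll3
    have h' : f ((0:ℝ), β 0) + f ((0:ℝ), β 0) + b
        = f ((0:ℝ), β 0) + f ((0:ℝ), β 0) + (p + p) := by
      calc f ((0:ℝ), β 0) + f ((0:ℝ), β 0) + b = f B + f ((0:ℝ), β 0) := by rw [hb]; abel
        _ = f P + f P := hd
        _ = f ((0:ℝ), β 0) + f ((0:ℝ), β 0) + (p + p) := by rw [hp]; abel
    exact add_left_cancel h'
  · -- part (ii)
    classical
    obtain ⟨δ, hδpos, hδIcc, hkey⟩ := exists_double hsys f hf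
    have hballD : ∀ y : ℝ, |y| < δ → y ∈ D := by
      intro y hy
      rw [abs_lt] at hy
      exact hδIcc ⟨hy.1.le, hy.2.le⟩
    set ψ : ℝ → ℝ := fun y => if h : |y| < δ then (hkey y h).choose else 0 with hψdef
    have hψD : ∀ y : ℝ, |y| < δ → ψ y ∈ D ∧ (0 < y → 0 < ψ y) ∧ (y < 0 → ψ y < 0) ∧
        f (ψ y, β (ψ y)) + f ((0:ℝ), β 0) = f (y, β y) + f (y, β y) := by
      intro y hy
      have h1 : ψ y = (hkey y hy).choose := by rw [hψdef]; exact dif_pos hy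
      rw [h1]
      exact (hkey y hy).choose_spec
    -- continuity of x ↦ f (x, β x) on D
    have hfc : ContinuousOn f (FunGraph β D) :=
      continuousOn_iff_continuous_restrict.mpr hf.2.1.continuous
    have hgc : ContinuousOn (fun x : ℝ => f (x, β x)) D := by
      have hc1 : ContinuousOn (fun x : ℝ => ((x, β x) : ℝ × ℝ)) D :=
        continuousOn_id.prodMk hsys.contB
      exact hfc.comp hc1 (fun x hx => ⟨hx, rfl⟩)
    -- injectivity
    have hginj : ∀ x₁ ∈ D, ∀ x₂ ∈ D, f (x₁, β x₁) = f (x₂, β x₂) → x₁ = x₂ := by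
      intro x₁ h₁ x₂ h₂ heq
      have h3 := hf.2.1.injective (a₁ := ⟨(x₁, β x₁), ⟨h₁, rfl⟩⟩)
        (a₂ := ⟨(x₂, β x₂), ⟨h₂, rfl⟩⟩) heq
      exact congrArg (fun q : ↥(FunGraph β D) => q.1.1) h3
    -- continuity of ψ on S
    set S : Set ℝ := Set.Ioo (-δ) δ with hSdef
    have hSabs : ∀ y ∈ S, |y| < δ := by
      intro y hy; rw [abs_lt]; exact ⟨hy.1, hy.2⟩
    have hSD : S ⊆ D := fun y hy => hballD y (hSabs y hy)
    have hgψ : ContinuousOn (fun y => f (ψ y, β (ψ y))) S := by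
      apply ContinuousOn.congr
        (((hgc.mono hSD).add (hgc.mono hSD)).sub continuousOn_const)
      intro y hy
      exact eq_sub_of_add_eq (hψD y (hSabs y hy)).2.2.2
    have hψc : ContinuousOn ψ S := by
      rw [continuousOn_iff_continuous_restrict]
      have hΨc : Continuous (fun y : ↥S =>
          (⟨(ψ y.1, β (ψ y.1)), ⟨(hψD y.1 (hSabs y.1 y.2)).1, rfl⟩⟩ : ↥(FunGraph β D))) := by
        rw [hf.2.1.continuous_iff]
        exact continuousOn_iff_continuous_restrict.mp hgψ
      exact (continuous_fst.comp continuous_subtype_val).comp hΨc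
    -- ψ 0 = 0
    have h0δ : |(0:ℝ)| < δ := by simpa using hδpos
    have hψ0 : ψ 0 = 0 :=
      hginj _ (hψD 0 h0δ).1 _ hsys.zeroMem (add_right_cancel (hψD 0 h0δ).2.2.2)
    -- values at ±δ/2
    have hhalf : |δ/2| < δ := by rw [abs_of_pos (by linarith)]; linarith
    have hhalf' : |(-(δ/2))| < δ := by rw [abs_neg]; exact hhalf
    have hpos : 0 < ψ (δ/2) := (hψD (δ/2) hhalf).2.1 (by linarith)
    have hneg : ψ (-(δ/2)) < 0 := (hψD (-(δ/2)) hhalf').2.2.1 (by linarith)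
    -- IVT for ψ
    have huS : Set.uIcc (-(δ/2)) (δ/2) ⊆ S := by
      rw [Set.uIcc_of_le (by linarith)]
      intro x hx
      exact ⟨by linarith [hx.1], by linarith [hx.2]⟩
    have himage := intermediate_value_uIcc (hψc.mono huS)
    refine ⟨min (ψ (δ/2)) (-(ψ (-(δ/2)))), lt_min hpos (by linarith), ?_⟩
    intro B hB hdist
    have hx1 : dist B.1 (0:ℝ) ≤ dist B (((0:ℝ), β 0) : ℝ × ℝ) := by
      rw [Prod.dist_eq]; exact le_max_left _ _
    have hxlt : |B.1| < min (ψ (δ/2)) (-(ψ (-(δ/2)))) := by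
      rw [Real.dist_eq, sub_zero] at hx1; linarith
    rw [abs_lt] at hxlt
    have hmin1 := min_le_left (ψ (δ/2)) (-(ψ (-(δ/2))))
    have hmin2 := min_le_right (ψ (δ/2)) (-(ψ (-(δ/2))))
    have hxmem : B.1 ∈ Set.uIcc (ψ (-(δ/2))) (ψ (δ/2)) := by
      rw [Set.uIcc_of_le (by linarith)]
      exact ⟨by linarith, by linarith⟩
    obtain ⟨y, hymem, hyx⟩ := himage hxmem
    have hyδ : |y| < δ := hSabs y (huS hymem)
    refine ⟨(y, β y), ⟨hballD y hyδ, rfl⟩, ?_⟩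
    have heq := (hψD y hyδ).2.2.2
    rw [hyx] at heq
    have hBeq : B = (B.1, β B.1) := Prod.ext_iff.mpr ⟨rfl, hB.2⟩
    rw [hBeq]
    have hb : f (B.1, β B.1) = f (y, β y) + f (y, β y) - f ((0:ℝ), β 0) := by
      rw [← heq]; abel
    rw [hb]; abel
end
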